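/- Define the operator entanglement of a d²×d² unitary U as E(U) = 1 − tr[(U^R U^{R†})²]/d⁴. Then E(U) ≤ 1 − 1/d², with equality if and only if U^R is unitary (i.e. U is dual-unitary). -/

import Mathlib

open Matrix Finset

/-- Realignment: `(U^R)[(β,α),(j,i)] = U[(i,α),(j,β)]`. -/
def realign (d : ℕ) (U : Matrix (Fin d × Fin d) (Fin d × Fin d) ℂ) :
    Matrix (Fin d × Fin d) (Fin d × Fin d) ℂ :=
  Matrix.of fun p q => U (q.2, p.2) (q.1, p.1)

/-- Operator entanglement `E(U) = 1 - tr[(U^R U^{R†})²]/d⁴`. -/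
noncomputable def opEnt (d : ℕ) (U : Matrix (Fin d × Fin d) (Fin d × Fin d) ℂ) : ℝ :=
  1 - (Matrix.trace ((realign d U * (realign d U)ᴴ) ^ 2)).re / (d : ℝ) ^ 4

/-- Expansion of `tr (N Nᴴ)` as a sum of `normSq` of entries. -/
lemma trace_mul_conjTranspose_expand {ι : Type*} [Fintype ι] [DecidableEq ι]
    (N : Matrix ι ι ℂ) :
    Matrix.trace (N * Nᴴ) = ∑ x : ι × ι, (Complex.normSq (N x.1 x.2) : ℂ) := by
  rw [Fintype.sum_prod_type, Matrix.trace]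
  refine Finset.sum_congr rfl fun p _ => ?_
  simp only [Matrix.diag, Matrix.mul_apply, Matrix.conjTranspose_apply]
  exact Finset.sum_congr rfl fun q _ => Complex.mul_conj _

theorem opEnt_le_and_eq_iff_dual (d : ℕ) (hd : 0 < d)
    (U : Matrix (Fin d × Fin d) (Fin d × Fin d) ℂ)
    (hU : U ∈ Matrix.unitaryGroup (Fin d × Fin d) ℂ) :
    opEnt d U ≤ 1 - 1 / (d : ℝ) ^ 2 ∧
      (opEnt d U = 1 - 1 / (d : ℝ) ^ 2 ↔
        realign d U ∈ Matrix.unitaryGroup (Fin d × Fin d) ℂ) := by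
  classical
  set M := realign d U with hMdef
  set A := M * Mᴴ with hAdef
  have hHerm : A.IsHermitian := isHermitian_mul_conjTranspose_self M
  have hUU : U * Uᴴ = 1 := by
    have := Matrix.mem_unitaryGroup_iff.mp hU
    simpa [Matrix.star_eq_conjTranspose] using this
  -- trace A = d^2
  have htrA : Matrix.trace A = ((d : ℂ) * d) := by
    rw [hAdef, trace_mul_conjTranspose_expand]
    have hre : (∑ x : (Fin d × Fin d) × (Fin d × Fin d), (Complex.normSq (M x.1 x.2) : ℂ))
        = ∑ x : (Fin d × Fin d) × (Fin d × Fin d), (Complex.normSq (U x.1 x.2) : ℂ) := by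
      have einv : Function.Involutive
          (fun x : (Fin d × Fin d) × (Fin d × Fin d) => ((x.2.2, x.1.2), (x.2.1, x.1.1))) :=
        fun x => rfl
      exact Fintype.sum_bijective _ einv.bijective _ _ fun x => rfl
    rw [hre, ← trace_mul_conjTranspose_expand, hUU, Matrix.trace_one]
    simp [Fintype.card_prod]
  -- real diagonal
  set x : Fin d × Fin d → ℝ := fun p => (A p p).re with hxdef
  have hdiag : ∀ p, A p p = ((x p : ℝ) : ℂ) := fun p => (hHerm.coe_re_apply_self p).symm
  have hxsum : ∑ p, x p = (d : ℝ) * d := by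
    have h := congrArg Complex.re htrA
    simpa [Matrix.trace, Matrix.diag, Complex.re_sum, hxdef] using h
  -- trace A^2 as a real sum
  set T : ℝ := ∑ p, ∑ q, Complex.normSq (A p q) with hTdef
  have htrA2 : (Matrix.trace (A ^ 2)).re = T := by
    have h1 : Matrix.trace (A ^ 2) = ∑ p, ∑ q, (Complex.normSq (A p q) : ℂ) := by
      rw [pow_two, Matrix.trace]
      refine Finset.sum_congr rfl fun p _ => ?_
      simp only [Matrix.diag, Matrix.mul_apply]
      refine Finset.sum_congr rfl fun q _ => ?_
      have h2 : A q p = star (A p q) := by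
        conv_lhs => rw [← hHerm]
        rfl
      rw [h2]
      exact Complex.mul_conj _
    rw [h1]
    simp [Complex.re_sum, hTdef]
  -- decomposition T = d^2 + S with S ≥ 0
  set g : Fin d × Fin d → ℝ :=
    fun p => (x p - 1) ^ 2 + ∑ q ∈ Finset.univ.erase p, Complex.normSq (A p q) with hgdef
  have hg_nonneg : ∀ p, 0 ≤ g p := by
    intro p
    have : (0:ℝ) ≤ ∑ q ∈ Finset.univ.erase p, Complex.normSq (A p q) :=
      Finset.sum_nonneg fun q _ => Complex.normSq_nonneg _
    rw [hgdef]
    positivity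
  have hsplit : ∀ p, (∑ q, Complex.normSq (A p q))
      = x p ^ 2 + ∑ q ∈ Finset.univ.erase p, Complex.normSq (A p q) := by
    intro p
    rw [← Finset.add_sum_erase _ _ (Finset.mem_univ p)]
    congr 1
    rw [hdiag p, Complex.normSq_ofReal, sq]
  have hcard : (Finset.univ : Finset (Fin d × Fin d)).card = d * d := by
    simp [Fintype.card_prod]
  have hsq : ∑ p, (x p - 1) ^ 2 = ∑ p, x p ^ 2 - 2 * ((d:ℝ) * d) + (d : ℝ) * d := by
    have he : ∀ p : Fin d × Fin d, (x p - 1) ^ 2 = x p ^ 2 - 2 * x p + 1 := fun p => by ring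
    simp only [he]
    rw [Finset.sum_add_distrib, Finset.sum_sub_distrib, ← Finset.mul_sum, hxsum,
      Finset.sum_const, hcard, nsmul_eq_mul]
    push_cast
    ring
  have hkey : T = (d : ℝ) * d + ∑ p, g p := by
    have h1 : T = ∑ p, x p ^ 2 + ∑ p, ∑ q ∈ Finset.univ.erase p, Complex.normSq (A p q) := by
      rw [hTdef]
      simp only [hsplit]
      rw [Finset.sum_add_distrib]
    have h2 : ∑ p, g p = ∑ p, (x p - 1) ^ 2
        + ∑ p, ∑ q ∈ Finset.univ.erase p, Complex.normSq (A p q) := by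
      rw [hgdef, Finset.sum_add_distrib]
    rw [h1, h2, hsq]
    ring
  have hS_nonneg : 0 ≤ ∑ p, g p := Finset.sum_nonneg fun p _ => hg_nonneg p
  -- opEnt formula
  have hopEnt : opEnt d U = 1 - T / (d : ℝ) ^ 4 := by
    rw [opEnt, htrA2]
  have hd4 : (0:ℝ) < (d : ℝ) ^ 4 := by positivity
  have hd2 : (0:ℝ) < (d : ℝ) ^ 2 := by positivity
  constructor
  · -- inequality
    rw [hopEnt]
    have hT_ge : (d : ℝ) ^ 2 ≤ T := by
      rw [hkey]; nlinarith [hS_nonneg]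
    have : 1 / (d : ℝ) ^ 2 ≤ T / (d : ℝ) ^ 4 := by
      rw [div_le_div_iff₀ hd2 hd4]
      nlinarith
    linarith
  · constructor
    · -- equality → realign unitary
      intro heq
      rw [hopEnt] at heq
      have h1 : T / (d : ℝ) ^ 4 = 1 / (d : ℝ) ^ 2 := by linarith
      have hTeq : T = (d : ℝ) ^ 2 := by
        field_simp at h1
        nlinarith [hd2]
      have hSzero : ∑ p, g p = 0 := by
        rw [hkey] at hTeq; nlinarith
      have hgzero : ∀ p ∈ Finset.univ, g p = 0 :=
        (Finset.sum_eq_zero_iff_of_nonneg fun p _ => hg_nonneg p).mp hSzero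
      have hA1 : A = 1 := by
        apply Matrix.ext
        intro p q
        have hgp : (x p - 1) ^ 2 + ∑ r ∈ Finset.univ.erase p, Complex.normSq (A p r) = 0 :=
          hgzero p (Finset.mem_univ p)
        have hoff_nonneg : (0:ℝ) ≤ ∑ r ∈ Finset.univ.erase p, Complex.normSq (A p r) :=
          Finset.sum_nonneg fun r _ => Complex.normSq_nonneg _
        have hsq_nonneg : (0:ℝ) ≤ (x p - 1) ^ 2 := sq_nonneg _
        have hsq0 : (x p - 1) ^ 2 = 0 := by linarith
        have hoff0 : ∑ r ∈ Finset.univ.erase p, Complex.normSq (A p r) = 0 := by linarith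
        have hxp : x p = 1 := sub_eq_zero.mp (sq_eq_zero_iff.mp hsq0)
        by_cases hpq : q = p
        · subst hpq
          rw [hdiag q, hxp, Matrix.one_apply_eq]
          norm_num
        · have hq_mem : q ∈ Finset.univ.erase p := Finset.mem_erase.mpr ⟨hpq, Finset.mem_univ q⟩
          have h0 := (Finset.sum_eq_zero_iff_of_nonneg
            (fun r _ => Complex.normSq_nonneg (A p r))).mp hoff0 q hq_mem
          have hApq : A p q = 0 := Complex.normSq_eq_zero.mp h0
          rw [hApq, Matrix.one_apply_ne' hpq]
      rw [Matrix.mem_unitaryGroup_iff, Matrix.star_eq_conjTranspose]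
      exact hA1
    · -- realign unitary → equality
      intro hMem
      have hA1 : A = 1 := by
        have h := Matrix.mem_unitaryGroup_iff.mp hMem
        rw [Matrix.star_eq_conjTranspose] at h
        exact h
      have hre : (Matrix.trace (A ^ 2)).re = ((d * d : ℕ) : ℝ) := by
        rw [hA1]
        simp [Fintype.card_prod]
      have hTval : T = (d : ℝ) * d := by
        rw [← htrA2, hre]
        push_cast
        ring
      rw [hopEnt, hTval]
      have hdne : (d : ℝ) ≠ 0 := by positivity
      field_simp
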